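/- Let m, n be positive integers with 1 < m < n, and write n = qm + r with 0 ≤ r < m (Euclidean division). Let R = k[x^n, x^{n-1} y, x^{n-m} y^m, y^n]. If r = 0 then R is Cohen–Macaulay; if r ≠ 0 then R is Cohen–Macaulay if and only if q + r ≥ m. -/

import Mathlib

open MvPolynomial

set_option synthInstance.maxHeartbeats 1000000
set_option maxHeartbeats 2000000

/-! Auxiliary definitions and lemmas -/

private noncomputable def eA18 (n : ℕ) : Fin 2 →₀ ℕ := Finsupp.single 0 n
private noncomputable def eB18 (n : ℕ) : Fin 2 →₀ ℕ :=
  Finsupp.single 0 (n-1) + Finsupp.single 1 1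
private noncomputable def eC18 (m n : ℕ) : Fin 2 →₀ ℕ :=
  Finsupp.single 0 (n-m) + Finsupp.single 1 m
private noncomputable def eD18 (n : ℕ) : Fin 2 →₀ ℕ := Finsupp.single 1 n

private noncomputable def T18 (m n : ℕ) : AddSubmonoid (Fin 2 →₀ ℕ) :=
  AddSubmonoid.closure {eA18 n, eB18 n, eC18 m n, eD18 n}

private lemma key18 {m n q r t v : ℕ} (hm : 1 < m) (hmn : m < n)
    (hdiv : n = q * m + r) (hr : r < m) (hcm : r = 0 ∨ m ≤ q + r)
    (h : ∃ b c d : ℕ, b + c + d ≤ t ∧ v + n = b + c * m + d * n) :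
    ∃ b c d : ℕ, b + c + d + 1 ≤ t ∧ v = b + c * m + d * n := by
  obtain ⟨b, c, d, hle, heq⟩ := h
  have hq : 1 ≤ q := by
    rcases Nat.eq_zero_or_pos q with hq0 | hq0
    · subst hq0; simp at hdiv; omega
    · exact hq0
  rcases d with _ | d₀
  · -- d = 0
    simp only [Nat.zero_mul, Nat.add_zero, Nat.mul_zero] at heq
    rcases le_or_gt q c with hqc | hqc
    · obtain ⟨c₀, rfl⟩ : ∃ c₀, c = q + c₀ := ⟨c - q, by omega⟩
      rcases le_or_gt r b with hrb | hrb
      · obtain ⟨b₀, rfl⟩ : ∃ b₀, b = r + b₀ := ⟨b - r, by omega⟩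
        refine ⟨b₀, c₀, 0, by omega, ?_⟩
        rw [add_mul] at heq
        have hQ : v + (q * m + r) = r + b₀ + (q * m + c₀ * m) := by
          rw [← hdiv]; omega
        generalize q * m = Q at hQ
        generalize c₀ * m = C at hQ ⊢
        omega
      · -- b < r
        have hr0 : m ≤ q + r := by
          rcases hcm with h0 | h0
          · omega
          · exact h0
        have hc1 : 1 ≤ c₀ := by
          by_contra hc
          have : c₀ = 0 := by omega
          subst this
          rw [hdiv, Nat.add_zero] at heq
          omega
        obtain ⟨c₁, rfl⟩ : ∃ c₁, c₀ = 1 + c₁ := ⟨c₀ - 1, by omega⟩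
        refine ⟨b + m - r, c₁, 0, by omega, ?_⟩
        have hQ : v + (q * m + r) = b + (q * m + (m + c₁ * m)) := by
          rw [← hdiv, heq]; ring
        generalize q * m = Q at hQ
        generalize c₁ * m = C at hQ ⊢
        omega
    · -- c < q
      have hcc : c * m + m ≤ q * m := by
        calc c * m + m = (c + 1) * m := by ring
        _ ≤ q * m := Nat.mul_le_mul_right m (by omega)
      rw [hdiv] at heq
      refine ⟨v, 0, 0, ?_, by ring⟩
      generalize hQ : q * m = Q at hcc heq
      generalize c * m = C at hcc heq
      omega
  · -- d = d₀ + 1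
    refine ⟨b, c, d₀, by omega, ?_⟩
    have : v + n = b + c * m + (d₀ * n + n) := by rw [heq]; ring
    omega

private lemma rep18 {m n u v : ℕ} (hn : 1 ≤ n) (hmn : m ≤ n) :
    (∃ a b c d : ℕ, u = a * n + b * (n - 1) + c * (n - m) ∧ v = b + c * m + d * n) ↔
    (∃ t, u + v = t * n ∧ ∃ b c d : ℕ, b + c + d ≤ t ∧ v = b + c * m + d * n) := by
  constructor
  · rintro ⟨a, b, c, d, hu, hv⟩
    refine ⟨a + b + c + d, ?_, b, c, d, by omega, hv⟩
    have h1 : b * (n - 1) + b * 1 = b * n := by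
      rw [← Nat.mul_add, Nat.sub_add_cancel hn]
    have h2 : c * (n - m) + c * m = c * n := by
      rw [← Nat.mul_add, Nat.sub_add_cancel hmn]
    have : u + v = a * n + (b * (n-1) + b * 1) + (c * (n-m) + c * m) + d * n := by
      rw [hu, hv]; ring
    rw [this, h1, h2]; ring
  · rintro ⟨t, hsum, b, c, d, hle, hv⟩
    refine ⟨t - (b + c + d), b, c, d, ?_, hv⟩
    have h1 : b * (n - 1) + b * 1 = b * n := by
      rw [← Nat.mul_add, Nat.sub_add_cancel hn]
    have h2 : c * (n - m) + c * m = c * n := by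
      rw [← Nat.mul_add, Nat.sub_add_cancel hmn]
    have key : (t - (b + c + d)) * n + b * (n-1) + c * (n-m) + v = t * n := by
      have : (t - (b+c+d)) * n + b * (n-1) + c * (n-m) + v
           = (t - (b+c+d)) * n + (b * (n-1) + b * 1) + (c * (n-m) + c * m) + d * n := by
        rw [hv]; ring
      rw [this, h1, h2, ← Nat.add_mul, ← Nat.add_mul, ← Nat.add_mul]
      congr 1
      omega
    generalize hX : (t - (b + c + d)) * n + b * (n-1) + c * (n-m) = X at key ⊢
    generalize t * n = T at key hsum
    omega

private lemma memT18 {m n : ℕ} (e : Fin 2 →₀ ℕ) :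
    e ∈ T18 m n ↔ ∃ a b c d : ℕ,
      e 0 = a * n + b * (n-1) + c * (n-m) ∧ e 1 = b + c * m + d * n := by
  constructor
  · intro he
    induction he using AddSubmonoid.closure_induction with
    | mem x hx =>
      rcases hx with h | h | h | h
      · exact ⟨1, 0, 0, 0, by simp [h, eA18], by simp [h, eA18, Finsupp.single_apply]⟩
      · exact ⟨0, 1, 0, 0, by simp [h, eB18, Finsupp.single_apply],
          by simp [h, eB18, Finsupp.single_apply]⟩
      · exact ⟨0, 0, 1, 0, by simp [h, eC18, Finsupp.single_apply],
          by simp [h, eC18, Finsupp.single_apply]⟩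
      · simp only [Set.mem_singleton_iff] at h
        exact ⟨0, 0, 0, 1, by simp [h, eD18, Finsupp.single_apply],
          by simp [h, eD18, Finsupp.single_apply]⟩
    | zero => exact ⟨0, 0, 0, 0, by simp, by simp⟩
    | add x y hx hy ihx ihy =>
      obtain ⟨a, b, c, d, h0, h1⟩ := ihx
      obtain ⟨a', b', c', d', h0', h1'⟩ := ihy
      exact ⟨a + a', b + b', c + c', d + d',
        by simp only [Finsupp.add_apply, h0, h0']; ring,
        by simp only [Finsupp.add_apply, h1, h1']; ring⟩
  · rintro ⟨a, b, c, d, h0, h1⟩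
    have heq : e = a • eA18 n + b • eB18 n + c • eC18 m n + d • eD18 n := by
      ext j
      fin_cases j
      · simpa [eA18, eB18, eC18, eD18, Finsupp.single_apply] using h0
      · simpa [eA18, eB18, eC18, eD18, Finsupp.single_apply] using h1
    rw [heq]
    have hA : eA18 n ∈ T18 m n := AddSubmonoid.subset_closure (by simp)
    have hB : eB18 n ∈ T18 m n := AddSubmonoid.subset_closure (by simp)
    have hC : eC18 m n ∈ T18 m n := AddSubmonoid.subset_closure (by simp)
    have hD : eD18 n ∈ T18 m n := AddSubmonoid.subset_closure (by simp)
    exact add_mem (add_mem (add_mem (AddSubmonoid.nsmul_mem _ hA a)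
      (AddSubmonoid.nsmul_mem _ hB b)) (AddSubmonoid.nsmul_mem _ hC c))
      (AddSubmonoid.nsmul_mem _ hD d)

private lemma step18 {m n q r : ℕ} (hm : 1 < m) (hmn : m < n)
    (hdiv : n = q * m + r) (hr : r < m) (hcm : r = 0 ∨ m ≤ q + r)
    {e s : Fin 2 →₀ ℕ} (hs : s ∈ T18 m n) (heq : eD18 n + e = eA18 n + s) :
    ∃ s' ∈ T18 m n, e = eA18 n + s' := by
  have hn1 : 1 ≤ n := by omega
  have hmn' : m ≤ n := by omega
  have h0 : e 0 = n + s 0 := by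
    have := congrArg (fun f : Fin 2 →₀ ℕ => f 0) heq
    simpa [eA18, eD18, Finsupp.single_apply] using this
  have h1 : n + e 1 = s 1 := by
    have := congrArg (fun f : Fin 2 →₀ ℕ => f 1) heq
    simpa [eA18, eD18, Finsupp.single_apply] using this
  obtain ⟨t, hsum, b', c', d', hle', hv'⟩ :=
    (rep18 hn1 hmn').mp ((memT18 s).mp hs)
  have hv'' : ∃ b c d : ℕ, b + c + d ≤ t ∧ (e 1) + n = b + c * m + d * n :=
    ⟨b', c', d', hle', by rw [← hv', ← h1]; ring⟩
  obtain ⟨b, c, d, hle, he1⟩ := key18 hm hmn hdiv hr hcm hv''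
  obtain ⟨t₀, rfl⟩ : ∃ t₀, t = t₀ + 1 := ⟨t - 1, by omega⟩
  set s' : Fin 2 →₀ ℕ := Finsupp.single 0 (s 0) + Finsupp.single 1 (e 1) with hs'def
  have hs'0 : s' 0 = s 0 := by simp [hs'def, Finsupp.single_apply]
  have hs'1 : s' 1 = e 1 := by simp [hs'def, Finsupp.single_apply]
  have hs'mem : s' ∈ T18 m n := by
    rw [memT18, hs'0, hs'1]
    apply (rep18 hn1 hmn').mpr
    refine ⟨t₀, ?_, b, c, d, by omega, he1⟩
    rw [add_mul, one_mul] at hsum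
    have : s 0 + (n + e 1) = t₀ * n + n := by rw [h1, hsum]
    omega
  refine ⟨s', hs'mem, ?_⟩
  ext j
  fin_cases j
  · simpa [eA18, Finsupp.single_apply, hs'0] using h0
  · simp [eA18, Finsupp.single_apply, hs'1]

private lemma genA {k : Type*} [Field k] (n : ℕ) :
    (X 0 ^ n : MvPolynomial (Fin 2) k) = monomial (eA18 n) 1 := X_pow_eq_monomial

private lemma genB {k : Type*} [Field k] (n : ℕ) :
    (X 0 ^ (n-1) * X 1 : MvPolynomial (Fin 2) k) = monomial (eB18 n) 1 := by
  rw [X_pow_eq_monomial, ← pow_one (X 1 : MvPolynomial (Fin 2) k), X_pow_eq_monomial,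
    monomial_mul, one_mul, eB18]

private lemma genC {k : Type*} [Field k] (m n : ℕ) :
    (X 0 ^ (n-m) * X 1 ^ m : MvPolynomial (Fin 2) k) = monomial (eC18 m n) 1 := by
  rw [X_pow_eq_monomial, X_pow_eq_monomial, monomial_mul, one_mul, eC18]

private lemma genD {k : Type*} [Field k] (n : ℕ) :
    (X 1 ^ n : MvPolynomial (Fin 2) k) = monomial (eD18 n) 1 := X_pow_eq_monomial

private lemma monomial_mem18 {k : Type*} [Field k] {m n : ℕ} {e : Fin 2 →₀ ℕ}
    (he : e ∈ T18 m n) :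
    (monomial e 1 : MvPolynomial (Fin 2) k) ∈ Algebra.adjoin k
      ({X 0 ^ n, X 0 ^ (n - 1) * X 1, X 0 ^ (n - m) * X 1 ^ m, X 1 ^ n} :
        Set (MvPolynomial (Fin 2) k)) := by
  induction he using AddSubmonoid.closure_induction with
  | mem x hx =>
    apply Algebra.subset_adjoin
    rcases hx with h | h | h | h
    · subst h; rw [← genA]; simp
    · subst h; rw [← genB]; simp
    · subst h; rw [← genC]; simp
    · simp only [Set.mem_singleton_iff] at h; subst h; rw [← genD]; simp
  | zero =>
    have : (monomial (0 : Fin 2 →₀ ℕ) 1 : MvPolynomial (Fin 2) k) = 1 := by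
      simp [monomial_zero']
    rw [this]; exact one_mem _
  | add x y hx hy ihx ihy =>
    have : (monomial (x + y) 1 : MvPolynomial (Fin 2) k)
        = monomial x 1 * monomial y 1 := by rw [monomial_mul, one_mul]
    rw [this]; exact mul_mem ihx ihy

private lemma memR18 {k : Type*} [Field k] {m n : ℕ} (p : MvPolynomial (Fin 2) k) :
    p ∈ Algebra.adjoin k
      ({X 0 ^ n, X 0 ^ (n - 1) * X 1, X 0 ^ (n - m) * X 1 ^ m, X 1 ^ n} :
        Set (MvPolynomial (Fin 2) k)) ↔ ∀ e ∈ p.support, e ∈ T18 m n := by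
  classical
  constructor
  · intro hp
    have hp' : p ∈ Submodule.span k ↑(Submonoid.closure
        ({X 0 ^ n, X 0 ^ (n - 1) * X 1, X 0 ^ (n - m) * X 1 ^ m, X 1 ^ n} :
          Set (MvPolynomial (Fin 2) k))) := by
      rw [← Algebra.adjoin_eq_span]; exact hp
    clear hp
    induction hp' using Submodule.span_induction with
    | mem x hx =>
      induction hx using Submonoid.closure_induction with
      | mem z hz =>
        intro e he
        rcases hz with h | h | h | h <;> subst h
        · rw [genA, support_monomial] at he
          simp only [one_ne_zero, if_false, Finset.mem_singleton] at he
          subst he; exact AddSubmonoid.subset_closure (by simp)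
        · rw [genB, support_monomial] at he
          simp only [one_ne_zero, if_false, Finset.mem_singleton] at he
          subst he; exact AddSubmonoid.subset_closure (by simp)
        · rw [genC, support_monomial] at he
          simp only [one_ne_zero, if_false, Finset.mem_singleton] at he
          subst he; exact AddSubmonoid.subset_closure (by simp)
        · rw [genD, support_monomial] at he
          simp only [one_ne_zero, if_false, Finset.mem_singleton] at he
          subst he; exact AddSubmonoid.subset_closure (by simp)
      | one =>
        intro e he
        rw [show (1 : MvPolynomial (Fin 2) k) = monomial 0 1 by simp [monomial_zero'],
          support_monomial] at he
        simp only [one_ne_zero, if_false, Finset.mem_singleton] at he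
        subst he; exact zero_mem _
      | mul x y hx hy ihx ihy =>
        intro e he
        obtain ⟨u, hu, v, hv, rfl⟩ := Finset.mem_add.mp (support_mul x y he)
        exact add_mem (ihx u hu) (ihy v hv)
    | zero => intro e he; simp at he
    | add x y hx hy ihx ihy =>
      intro e he
      rcases Finset.mem_union.mp (support_add he) with h | h
      · exact ihx e h
      · exact ihy e h
    | smul a x hx ihx =>
      intro e he
      exact ihx e (support_smul he)
  · intro hsupp
    rw [← support_sum_monomial_coeff p]
    refine Subalgebra.sum_mem _ fun e he => ?_
    have : (monomial e (coeff e p) : MvPolynomial (Fin 2) k)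
        = (coeff e p) • monomial e 1 := by rw [smul_monomial, smul_eq_mul, mul_one]
    rw [this]
    exact Subalgebra.smul_mem _ (monomial_mem18 (hsupp e he)) _

private lemma div18 {k : Type*} [Field k] {m n : ℕ} (p : MvPolynomial (Fin 2) k)
    (hp : ∀ e ∈ p.support, ∃ s ∈ T18 m n, e = eA18 n + s) :
    ∃ h : MvPolynomial (Fin 2) k, (∀ e ∈ h.support, e ∈ T18 m n) ∧
      p = monomial (eA18 n) 1 * h := by
  classical
  refine ⟨∑ e ∈ p.support, monomial (e - eA18 n) (coeff e p), ?_, ?_⟩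
  · intro e' he'
    rw [MvPolynomial.mem_support_iff, coeff_sum] at he'
    obtain ⟨e, he, hne⟩ : ∃ e ∈ p.support, coeff e' (monomial (e - eA18 n) (coeff e p)) ≠ 0 := by
      by_contra hc
      push_neg at hc
      exact he' (Finset.sum_eq_zero hc)
    rw [coeff_monomial] at hne
    obtain ⟨s, hs, hes⟩ := hp e he
    have : e - eA18 n = e' := by by_contra hc; simp [hc] at hne
    rw [← this, hes, add_tsub_cancel_left]
    exact hs
  · symm
    rw [Finset.mul_sum]
    calc ∑ e ∈ p.support, monomial (eA18 n) 1 * monomial (e - eA18 n) (coeff e p)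
        = ∑ e ∈ p.support, monomial e (coeff e p) := by
          apply Finset.sum_congr rfl
          intro e he
          rw [monomial_mul, one_mul]
          obtain ⟨s, hs, hes⟩ := hp e he
          rw [hes, add_tsub_cancel_left]
      _ = p := support_sum_monomial_coeff p

private lemma shift_mem_support18 {k : Type*} [Field k] {u : Fin 2 →₀ ℕ}
    (g : MvPolynomial (Fin 2) k) {e : Fin 2 →₀ ℕ} (he : e ∈ g.support) :
    u + e ∈ (monomial u 1 * g).support := by
  rw [MvPolynomial.mem_support_iff] at he ⊢
  rw [coeff_monomial_mul, one_mul]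
  exact he

private lemma support_monomial_mul18 {k : Type*} [Field k] {u : Fin 2 →₀ ℕ}
    (g : MvPolynomial (Fin 2) k) {e : Fin 2 →₀ ℕ} (he : e ∈ (monomial u 1 * g).support) :
    ∃ s ∈ g.support, e = u + s := by
  classical
  have := MvPolynomial.support_mul (monomial u 1) g he
  rw [support_monomial] at this
  simp only [one_ne_zero, if_false] at this
  obtain ⟨a, ha, b, hb, hab⟩ := Finset.mem_add.mp this
  rw [Finset.mem_singleton] at ha
  exact ⟨b, hb, by rw [← hab, ha]⟩

open Pointwise in
private lemma smulTop_mem_iff18 {A : Type*} [CommRing A] (x g : A) :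
    g ∈ x • (⊤ : Submodule A A) ↔ ∃ h, g = x * h := by
  rw [← Submodule.ideal_span_singleton_smul, smul_eq_mul, Ideal.mul_top,
    Ideal.mem_span_singleton']
  constructor
  · rintro ⟨a, rfl⟩; exact ⟨a, (mul_comm _ _)⟩
  · rintro ⟨a, rfl⟩; exact ⟨a, (mul_comm _ _)⟩

private lemma quot_reg_iff18 {A : Type*} [CommRing A] (x y : A) :
    IsSMulRegular (QuotSMulTop x A) y ↔
      (∀ g : A, (∃ h, y * g = x * h) → ∃ h, g = x * h) := by
  constructor
  · intro hreg g ⟨h, hgh⟩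
    have h1 : y • (Submodule.Quotient.mk g : QuotSMulTop x A) = y • 0 := by
      rw [smul_zero, ← Submodule.Quotient.mk_smul, Submodule.Quotient.mk_eq_zero,
        smulTop_mem_iff18]
      exact ⟨h, by rw [← hgh]; simp [smul_eq_mul]⟩
    have := hreg h1
    rw [Submodule.Quotient.mk_eq_zero, smulTop_mem_iff18] at this
    exact this
  · intro hprop z w hzw
    obtain ⟨g, rfl⟩ := Submodule.Quotient.mk_surjective _ z
    obtain ⟨g', rfl⟩ := Submodule.Quotient.mk_surjective _ w
    simp only [] at hzw
    rw [← Submodule.Quotient.mk_smul, ← Submodule.Quotient.mk_smul,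
      Submodule.Quotient.eq] at hzw
    rw [Submodule.Quotient.eq]
    have : y • g - y • g' = y * (g - g') := by rw [smul_eq_mul, smul_eq_mul]; ring
    rw [this, smulTop_mem_iff18] at hzw
    obtain ⟨h, hh⟩ := hprop (g - g') hzw
    rw [smulTop_mem_iff18]
    exact ⟨h, hh⟩

private lemma isRegular_iff18 {A : Type*} [CommRing A] (x y : A) :
    RingTheory.Sequence.IsRegular A [x, y] ↔
      IsSMulRegular A x ∧ (∀ g : A, (∃ h, y * g = x * h) → ∃ h, g = x * h) ∧
        ¬ (∃ u v : A, 1 = x * u + y * v) := by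
  rw [RingTheory.Sequence.isRegular_iff]
  rw [RingTheory.Sequence.isWeaklyRegular_cons_iff,
    RingTheory.Sequence.isWeaklyRegular_cons_iff]
  have hnil : RingTheory.Sequence.IsWeaklyRegular (QuotSMulTop y (QuotSMulTop x A))
      ([] : List A) := RingTheory.Sequence.IsWeaklyRegular.nil _ _
  have htop : ((⊤ : Submodule A A) ≠ Ideal.ofList [x, y] • ⊤) ↔
      ¬ (∃ u v : A, 1 = x * u + y * v) := by
    rw [Ne, eq_comm, Submodule.eq_top_iff']
    constructor
    · intro hne ⟨u, v, huv⟩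
      apply hne
      intro g
      have h1 : (1 : A) ∈ Ideal.ofList [x, y] • (⊤ : Submodule A A) := by
        rw [Ideal.ofList_cons_smul, Ideal.ofList_cons_smul]
        simp only [Ideal.ofList_nil, Submodule.bot_smul, sup_bot_eq]
        apply Submodule.mem_sup.mpr
        exact ⟨x * u, (smulTop_mem_iff18 x _).mpr ⟨u, rfl⟩,
          y * v, (smulTop_mem_iff18 y _).mpr ⟨v, rfl⟩, huv.symm⟩
      have := Submodule.smul_mem (Ideal.ofList [x, y] • (⊤ : Submodule A A)) g h1
      simpa using this
    · intro hne h
      apply hne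
      have h1 := h 1
      rw [Ideal.ofList_cons_smul, Ideal.ofList_cons_smul] at h1
      simp only [Ideal.ofList_nil, Submodule.bot_smul, sup_bot_eq] at h1
      obtain ⟨a, ha, b, hb, hab⟩ := Submodule.mem_sup.mp h1
      obtain ⟨u, rfl⟩ := (smulTop_mem_iff18 x a).mp ha
      obtain ⟨v, rfl⟩ := (smulTop_mem_iff18 y b).mp hb
      exact ⟨u, v, hab.symm⟩
  rw [htop, quot_reg_iff18]
  tauto

private lemma CM18 {k : Type*} [Field k] {m n q r : ℕ} (hm : 1 < m) (hmn : m < n)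
    (hdiv : n = q * m + r) (hr : r < m) (hcm : r = 0 ∨ m ≤ q + r)
    (R : Subalgebra k (MvPolynomial (Fin 2) k))
    (hmem : ∀ p : MvPolynomial (Fin 2) k, p ∈ R ↔ ∀ e ∈ p.support, e ∈ T18 m n)
    (xn yn : R)
    (hxn : (xn : MvPolynomial (Fin 2) k) = X 0 ^ n)
    (hyn : (yn : MvPolynomial (Fin 2) k) = X 1 ^ n) :
    RingTheory.Sequence.IsRegular R [xn, yn] := by
  have hx0 : (X 0 ^ n : MvPolynomial (Fin 2) k) ≠ 0 := pow_ne_zero _ (X_ne_zero 0)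
  apply (isRegular_iff18 xn yn).mpr
  refine ⟨?_, ?_, ?_⟩
  · intro a b hab
    simp only [smul_eq_mul] at hab
    have h2 : (xn : MvPolynomial (Fin 2) k) * a = (xn : MvPolynomial (Fin 2) k) * b := by
      have := congrArg Subtype.val hab
      push_cast at this
      exact this
    exact Subtype.ext (mul_left_cancel₀ (by rw [hxn]; exact hx0) h2)
  · rintro g ⟨h, hgh⟩
    have hH : ∀ e ∈ (h : MvPolynomial (Fin 2) k).support, e ∈ T18 m n := (hmem _).mp h.2
    have heqpoly : monomial (eD18 n) 1 * (g : MvPolynomial (Fin 2) k)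
        = monomial (eA18 n) 1 * (h : MvPolynomial (Fin 2) k) := by
      have := congrArg Subtype.val hgh
      push_cast at this
      rw [hxn, hyn, genA, genD] at this
      exact this
    have hkey : ∀ e ∈ (g : MvPolynomial (Fin 2) k).support,
        ∃ s ∈ T18 m n, e = eA18 n + s := by
      intro e he
      have h1 := shift_mem_support18 (u := eD18 n) _ he
      rw [heqpoly] at h1
      obtain ⟨s, hsupp, hes⟩ := support_monomial_mul18 _ h1
      exact step18 hm hmn hdiv hr hcm (hH s hsupp) hes
    obtain ⟨h', hsupp', hGeq⟩ := div18 _ hkey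
    refine ⟨⟨h', (hmem _).mpr hsupp'⟩, Subtype.ext ?_⟩
    push_cast
    rw [hxn, genA]
    exact hGeq
  · rintro ⟨u, v, h1⟩
    have h2 := congrArg Subtype.val h1
    push_cast at h2
    rw [hxn, hyn] at h2
    have h3 := congrArg constantCoeff h2
    simp [map_add, map_mul, map_pow, zero_pow (show n ≠ 0 by omega)] at h3

private lemma notCM18 {k : Type*} [Field k] {m n q r : ℕ} (hm : 1 < m) (hmn : m < n)
    (hdiv : n = q * m + r) (hr : r < m) (hr1 : 1 ≤ r) (hqr : q + r < m)
    (R : Subalgebra k (MvPolynomial (Fin 2) k))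
    (hmem : ∀ p : MvPolynomial (Fin 2) k, p ∈ R ↔ ∀ e ∈ p.support, e ∈ T18 m n)
    (xn yn : R)
    (hxn : (xn : MvPolynomial (Fin 2) k) = X 0 ^ n)
    (hyn : (yn : MvPolynomial (Fin 2) k) = X 1 ^ n)
    (hreg : RingTheory.Sequence.IsRegular R [xn, yn]) : False := by
  classical
  have hq : 1 ≤ q := by
    rcases Nat.eq_zero_or_pos q with hq0 | hq0
    · subst hq0; simp at hdiv; omega
    · exact hq0
  have hm3 : 3 ≤ m := by omega
  have hn2 : 2 ≤ n := by omega
  have hT_A : eA18 n ∈ T18 m n := AddSubmonoid.subset_closure (by simp)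
  have hT_B : eB18 n ∈ T18 m n := AddSubmonoid.subset_closure (by simp)
  have hT_C : eC18 m n ∈ T18 m n := AddSubmonoid.subset_closure (by simp)
  have hBpow : ((X 0 ^ (n-1) * X 1 : MvPolynomial (Fin 2) k))^(m-1)
      = monomial ((m-1) • eB18 n) 1 := by
    rw [genB, monomial_pow, one_pow]
  have hgmem : ((X 0 ^ (n-1) * X 1 : MvPolynomial (Fin 2) k))^(m-1) ∈ R := by
    rw [hmem, hBpow, support_monomial]
    simp only [one_ne_zero, if_false]
    intro e he
    rw [Finset.mem_singleton] at he
    subst he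
    exact AddSubmonoid.nsmul_mem _ hT_B _
  have hHbig : ((X 0 ^ n : MvPolynomial (Fin 2) k))^(m-q-r-1)
        * (X 0 ^ (n-1) * X 1)^(r-1) * (X 0 ^ (n-m) * X 1 ^ m)^(q+1)
      = monomial ((m-q-r-1) • eA18 n + (r-1) • eB18 n + (q+1) • eC18 m n) 1 := by
    rw [genA, genB, genC, monomial_pow, monomial_pow, monomial_pow,
      monomial_mul, monomial_mul, one_pow, one_pow, one_pow, one_mul, one_mul]
  have hHmem : ((X 0 ^ n : MvPolynomial (Fin 2) k))^(m-q-r-1)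
        * (X 0 ^ (n-1) * X 1)^(r-1) * (X 0 ^ (n-m) * X 1 ^ m)^(q+1) ∈ R := by
    rw [hmem, hHbig, support_monomial]
    simp only [one_ne_zero, if_false]
    intro e he
    rw [Finset.mem_singleton] at he
    subst he
    exact add_mem (add_mem (AddSubmonoid.nsmul_mem _ hT_A _)
      (AddSubmonoid.nsmul_mem _ hT_B _)) (AddSubmonoid.nsmul_mem _ hT_C _)
  -- the key polynomial identity
  have hdz : (n : ℤ) = q * m + r := by exact_mod_cast hdiv
  have c1 : q ≤ m := by omega
  have c2 : r ≤ m - q := by omega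
  have c3 : 1 ≤ m - q - r := by omega
  have c4 : m ≤ n := by omega
  have c5 : 1 ≤ m := by omega
  have c6 : 1 ≤ n := by omega
  have heq : (X 1 ^ n : MvPolynomial (Fin 2) k) * (X 0 ^ (n-1) * X 1)^(m-1)
      = X 0 ^ n * (((X 0 ^ n : MvPolynomial (Fin 2) k))^(m-q-r-1)
        * (X 0 ^ (n-1) * X 1)^(r-1) * (X 0 ^ (n-m) * X 1 ^ m)^(q+1)) := by
    rw [genD, hBpow, hHbig, genA, monomial_mul, monomial_mul, one_mul]
    have hexp : eD18 n + (m-1) • eB18 n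
        = eA18 n + ((m-q-r-1) • eA18 n + (r-1) • eB18 n + (q+1) • eC18 m n) := by
      ext j
      fin_cases j
      · simp only [Finsupp.add_apply, Finsupp.smul_apply, eA18, eB18, eC18, eD18,
          Finsupp.single_apply, smul_eq_mul]
        norm_num
        zify [c1, c2, c3, c4, c5, c6, hr1]
        linear_combination -hdz
      · simp only [Finsupp.add_apply, Finsupp.smul_apply, eA18, eB18, eC18, eD18,
          Finsupp.single_apply, smul_eq_mul]
        norm_num
        zify [c5, hr1]
        linear_combination hdz
    rw [hexp]
  -- apply the regularity property
  have hprop := ((isRegular_iff18 xn yn).mp hreg).2.1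
  obtain ⟨h', hg'⟩ := hprop ⟨_, hgmem⟩ ⟨⟨_, hHmem⟩, Subtype.ext (by
    push_cast
    rw [hxn, hyn]
    exact heq)⟩
  have hpoly : ((X 0 ^ (n-1) * X 1 : MvPolynomial (Fin 2) k))^(m-1)
      = monomial (eA18 n) 1 * (h' : MvPolynomial (Fin 2) k) := by
    have := congrArg Subtype.val hg'
    push_cast at this
    rw [hxn, genA n] at this
    exact this
  have hge : n ≤ (m-1) * (n-1) := by
    have h2 : 2*(n-1) ≤ (m-1)*(n-1) := Nat.mul_le_mul_right (n-1) (by omega)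
    generalize (m-1)*(n-1) = W at h2 ⊢
    omega
  set E' : Fin 2 →₀ ℕ :=
    Finsupp.single 0 ((m-1)*(n-1) - n) + Finsupp.single 1 (m-1) with hE'def
  have hEq : (m-1) • eB18 n = eA18 n + E' := by
    ext j
    fin_cases j
    · simp only [hE'def, Finsupp.add_apply, Finsupp.smul_apply, eA18, eB18,
        Finsupp.single_apply, smul_eq_mul]
      norm_num
      generalize hW : (m-1)*(n-1) = W at hge ⊢
      omega
    · simp [hE'def, eA18, eB18, Finsupp.single_apply]
  have hmono_ne : (monomial (eA18 n) 1 : MvPolynomial (Fin 2) k) ≠ 0 := by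
    simp [monomial_eq_zero]
  have hH'eq : (h' : MvPolynomial (Fin 2) k) = monomial E' 1 := by
    apply mul_left_cancel₀ hmono_ne
    rw [← hpoly, hBpow, hEq, monomial_mul, one_mul]
  have hE' : E' ∈ T18 m n := by
    have hsup := (hmem _).mp h'.2
    apply hsup
    rw [hH'eq, support_monomial]
    simp
  obtain ⟨a, b, c, d, h0', h1'⟩ := (memT18 E').mp hE'
  have hE'0 : E' 0 = (m-1)*(n-1) - n := by simp [hE'def, Finsupp.single_apply]
  have hE'1 : E' 1 = m - 1 := by simp [hE'def, Finsupp.single_apply]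
  rw [hE'0] at h0'
  rw [hE'1] at h1'
  have hc : c = 0 := by
    by_contra hc
    have hc' : 1 * m ≤ c * m := Nat.mul_le_mul_right m (by omega)
    rw [one_mul] at hc'
    generalize c * m = C at h1' hc'
    generalize d * n = D at h1'
    omega
  have hd : d = 0 := by
    by_contra hd
    have hd' : 1 * n ≤ d * n := Nat.mul_le_mul_right n (by omega)
    rw [one_mul] at hd'
    generalize d * n = D at h1' hd'
    generalize c * m = C at h1'
    omega
  subst hc hd
  simp only [Nat.zero_mul, Nat.add_zero, Nat.mul_zero] at h0' h1'
  have hb : b = m - 1 := by omega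
  subst hb
  generalize hW : (m-1)*(n-1) = W at h0' hge
  generalize a * n = A at h0'
  omega

/-- Let `1 < m < n`, write `n = qm + r` with `0 ≤ r < m`, and let
`R = k[x^n, x^{n-1}y, x^{n-m}y^m, y^n]`.  If `r = 0` then `R` is Cohen–Macaulay; if `r ≠ 0`
then `R` is Cohen–Macaulay iff `q + r ≥ m`.  (Cohen–Macaulayness is equivalent to `x^n, y^n`
being a regular sequence on `R`.) -/
theorem stmt_18 (k : Type*) [Field k] (m n q r : ℕ) (hm : 1 < m) (hmn : m < n)
    (hdiv : n = q * m + r) (hr : r < m)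
    (R : Subalgebra k (MvPolynomial (Fin 2) k))
    (hR : R = Algebra.adjoin k
      ({X 0 ^ n, X 0 ^ (n - 1) * X 1, X 0 ^ (n - m) * X 1 ^ m, X 1 ^ n} :
        Set (MvPolynomial (Fin 2) k)))
    (xn yn : R)
    (hxn : (xn : MvPolynomial (Fin 2) k) = X 0 ^ n)
    (hyn : (yn : MvPolynomial (Fin 2) k) = X 1 ^ n) :
    (r = 0 → RingTheory.Sequence.IsRegular R [xn, yn]) ∧
    (r ≠ 0 → (RingTheory.Sequence.IsRegular R [xn, yn] ↔ m ≤ q + r)) := by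
  have hmem : ∀ p : MvPolynomial (Fin 2) k, p ∈ R ↔ ∀ e ∈ p.support, e ∈ T18 m n := by
    intro p
    rw [hR]
    exact memR18 p
  constructor
  · intro h0
    exact CM18 hm hmn hdiv hr (Or.inl h0) R hmem xn yn hxn hyn
  · intro h0
    constructor
    · intro hreg
      by_contra hqr
      push_neg at hqr
      exact notCM18 hm hmn hdiv hr (by omega) hqr R hmem xn yn hxn hyn hreg
    · intro hge
      exact CM18 hm hmn hdiv hr (Or.inr hge) R hmem xn yn hxn hyn
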